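/- For a Dyck path λ of size n with chord multiset Chord(λ), the rational function [n]! / ∏_{c ∈ Chord(λ)} [l(c)] is a polynomial in q with nonnegative integer coefficients (it is the generating function P^A_λ of cover-inclusive Dyck tilings above λ weighted by q^{art}). -/

import Mathlib

/-- The `q`-integer `[n] = 1 + q + ⋯ + q^{n-1}` as an element of `ℚ(q)`. -/
noncomputable def qInt (n : ℕ) : RatFunc ℚ := ∑ i ∈ Finset.range n, RatFunc.X ^ i

/-- The `q`-factorial `[n]! = ∏_{i=1}^{n} [i]`. -/
noncomputable def qFact (n : ℕ) : RatFunc ℚ := ∏ i ∈ Finset.Icc 1 n, qInt i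

/-- The canonical embedding of `ℕ[q]` into `ℚ(q)`. -/
noncomputable def natPolyToRatFunc (p : Polynomial ℕ) : RatFunc ℚ :=
  algebraMap (Polynomial ℚ) (RatFunc ℚ) (p.map (Nat.castRingHom ℚ))

/-- Height of the lattice path after the first `k` steps of `w`
(`true` = up step `U`, `false` = down step `D`). -/
def prefixHeight (w : List Bool) (k : ℕ) : ℤ :=
  ((w.take k).count true : ℤ) - ((w.take k).count false : ℤ)

/-- `w` is a Dyck word of size `n`: a balanced word of length `2n` in `U,D`
all of whose prefix heights are nonnegative. -/
def IsDyckWord (w : List Bool) (n : ℕ) : Prop :=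
  w.length = 2 * n ∧ w.count true = n ∧ ∀ k ≤ w.length, 0 ≤ prefixHeight w k

/-- Positions `i < j` form a chord of `w`: the `U` at position `i` is matched with
the `D` at position `j` in the parenthesis matching, i.e. the heights before step `i`
and after step `j` agree and the path stays strictly above that level in between. -/
def IsChord (w : List Bool) (i j : ℕ) : Prop :=
  i < j ∧ j < w.length ∧ w.getD i false = true ∧ w.getD j true = false ∧
    prefixHeight w i = prefixHeight w (j + 1) ∧
    ∀ k, i < k → k ≤ j → prefixHeight w i < prefixHeight w k

open scoped Classical in
/-- The set of chords of `w`, given by the matching of parentheses. -/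
noncomputable def chords (w : List Bool) : Finset (ℕ × ℕ) :=
  (Finset.range w.length ×ˢ Finset.range w.length).filter fun p => IsChord w p.1 p.2

open scoped Classical in
/-- The length `l(c)` of a chord `c`: the number of chords weakly nested inside `c`,
i.e. one plus the number of chords strictly nested inside `c`. -/
noncomputable def chordLength (w : List Bool) (c : ℕ × ℕ) : ℕ :=
  ((chords w).filter fun p => c.1 ≤ p.1 ∧ p.2 ≤ c.2).card

lemma natPoly_mul (p q : Polynomial ℕ) :
    natPolyToRatFunc (p * q) = natPolyToRatFunc p * natPolyToRatFunc q := by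
  simp [natPolyToRatFunc, Polynomial.map_mul]

lemma natPoly_add (p q : Polynomial ℕ) :
    natPolyToRatFunc (p + q) = natPolyToRatFunc p + natPolyToRatFunc q := by
  simp [natPolyToRatFunc, Polynomial.map_add]

lemma natPoly_one : natPolyToRatFunc 1 = 1 := by simp [natPolyToRatFunc]

lemma natPoly_X_pow (k : ℕ) : natPolyToRatFunc (Polynomial.X ^ k) = RatFunc.X ^ k := by
  rw [natPolyToRatFunc, Polynomial.map_pow, Polynomial.map_X, map_pow, RatFunc.algebraMap_X]

lemma qInt_eq_natPoly (n : ℕ) :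
    qInt n = natPolyToRatFunc (∑ i ∈ Finset.range n, Polynomial.X ^ i) := by
  rw [qInt, natPolyToRatFunc, Polynomial.map_sum, map_sum]
  refine Finset.sum_congr rfl fun i _ => ?_
  rw [Polynomial.map_pow, Polynomial.map_X, map_pow, RatFunc.algebraMap_X]

lemma qInt_ne_zero {n : ℕ} (hn : 0 < n) : qInt n ≠ 0 := by
  rw [qInt_eq_natPoly]
  simp only [natPolyToRatFunc]
  intro h
  have h2 : ((∑ i ∈ Finset.range n, Polynomial.X ^ i : Polynomial ℕ).map
      (Nat.castRingHom ℚ)) = 0 :=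
    (map_eq_zero_iff _ (RatFunc.algebraMap_injective ℚ)).mp h
  have h3 := congrArg (fun p => Polynomial.eval 1 p) h2
  simp [Polynomial.eval_finset_sum] at h3
  omega

lemma qFact_ne_zero (n : ℕ) : qFact n ≠ 0 := by
  rw [qFact]
  apply Finset.prod_ne_zero_iff.2
  intro i hi
  exact qInt_ne_zero (by simp at hi; omega)

lemma qFact_zero : qFact 0 = 1 := by simp [qFact]

lemma qInt_split (a b : ℕ) : qInt (a + b) = qInt a + RatFunc.X ^ a * qInt b := by
  rw [qInt, qInt, qInt, Finset.sum_range_add, Finset.mul_sum]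
  congr 1
  exact Finset.sum_congr rfl fun i _ => (pow_add _ _ _)

lemma qFact_succ (n : ℕ) : qFact (n + 1) = qFact n * qInt (n + 1) := by
  rw [qFact, qFact, Finset.prod_Icc_succ_top (by omega)]

noncomputable def qBinom (n k : ℕ) : RatFunc ℚ := qFact n / (qFact k * qFact (n - k))

lemma qBinom_isNatPoly : ∀ n k : ℕ, k ≤ n → ∃ p, qBinom n k = natPolyToRatFunc p := by
  intro n
  induction n with
  | zero =>
    intro k hk; interval_cases k
    exact ⟨1, by simp [natPoly_one, qBinom, qFact_zero]⟩
  | succ n ih =>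
    intro k hk
    rcases Nat.eq_zero_or_pos k with rfl | hk0
    · exact ⟨1, by rw [natPoly_one, qBinom, Nat.sub_zero, qFact_zero, one_mul,
        div_self (qFact_ne_zero _)]⟩
    rcases eq_or_lt_of_le hk with rfl | hklt
    · exact ⟨1, by rw [natPoly_one, qBinom, Nat.sub_self, qFact_zero, mul_one,
        div_self (qFact_ne_zero _)]⟩
    obtain ⟨j, rfl⟩ : ∃ j, k = j + 1 := ⟨k - 1, by omega⟩
    obtain ⟨m, rfl⟩ : ∃ m, n = j + 1 + m := ⟨n - (j + 1), by omega⟩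
    obtain ⟨p1, hp1⟩ := ih j (by omega)
    obtain ⟨p2, hp2⟩ := ih (j + 1) (by omega)
    refine ⟨p1 + Polynomial.X ^ (j + 1) * p2, ?_⟩
    rw [natPoly_add, natPoly_mul, natPoly_X_pow, ← hp1, ← hp2]
    rw [qBinom, qBinom, qBinom]
    have e1 : j + 1 + m + 1 - (j + 1) = m + 1 := by omega
    have e2 : j + 1 + m - j = m + 1 := by omega
    have e3 : j + 1 + m - (j + 1) = m := by omega
    rw [e1, e2, e3]
    have hq : qInt (j + 1 + m + 1) = qInt (j + 1) + RatFunc.X ^ (j + 1) * qInt (m + 1) := by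
      rw [show j + 1 + m + 1 = (j + 1) + (m + 1) from by omega]
      exact qInt_split (j + 1) (m + 1)
    have hFn : qFact (j + 1 + m + 1) = qFact (j + 1 + m) * qInt (j + 1 + m + 1) := qFact_succ _
    rw [hFn, hq, qFact_succ j, qFact_succ m]
    have h1 : qFact j ≠ 0 := qFact_ne_zero _
    have h2 : qFact m ≠ 0 := qFact_ne_zero _
    have h3 : qInt (j + 1) ≠ 0 := qInt_ne_zero (by omega)
    have h4 : qInt (m + 1) ≠ 0 := qInt_ne_zero (by omega)
    field_simp

-- prefixHeight basics

lemma ph_zero (w : List Bool) : prefixHeight w 0 = 0 := by simp [prefixHeight]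

lemma ph_cons (b : Bool) (w : List Bool) (s : ℕ) :
    prefixHeight (b :: w) (s + 1) = (if b then 1 else -1) + prefixHeight w s := by
  cases b <;> simp [prefixHeight, List.take_succ_cons, List.count_cons] <;> push_cast <;> ring

lemma ph_append_left (w1 w2 : List Bool) {s : ℕ} (h : s ≤ w1.length) :
    prefixHeight (w1 ++ w2) s = prefixHeight w1 s := by
  simp [prefixHeight, List.take_append_of_le_length h]

lemma ph_append_add (w1 w2 : List Bool) (s : ℕ) :
    prefixHeight (w1 ++ w2) (w1.length + s)
      = prefixHeight w1 w1.length + prefixHeight w2 s := by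
  simp only [prefixHeight, List.take_append, List.count_append, List.take_length, Nat.add_sub_cancel_left, List.take_of_length_le (Nat.le_add_right _ _)]
  push_cast; ring

lemma count_true_add_count_false (l : List Bool) :
    l.count true + l.count false = l.length := by
  induction l with
  | nil => simp
  | cons b l ih => cases b <;> simp [List.count_cons] <;> omega

lemma ph_length (w : List Bool) :
    prefixHeight w w.length = (w.count true : ℤ) - (w.count false : ℤ) := by
  simp [prefixHeight]

lemma take_succ_getD (w : List Bool) (s : ℕ) (h : s < w.length) :
    w.take (s + 1) = w.take s ++ [w.getD s false] := by
  rw [List.take_succ, List.getElem?_eq_getElem h]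
  simp [List.getD_eq_getElem?_getD, List.getElem?_eq_getElem h]

lemma ph_succ (w : List Bool) (s : ℕ) (h : s < w.length) :
    prefixHeight w (s + 1)
      = prefixHeight w s + (if w.getD s false = true then 1 else -1) := by
  rw [prefixHeight, prefixHeight, take_succ_getD w s h]
  rcases Bool.eq_false_or_eq_true (w.getD s false) with hb | hb <;>
    rw [hb] <;> simp [List.count_append] <;> push_cast <;> ring

-- getD helpers

lemma getD_append_left {w1 w2 : List Bool} {a : ℕ} (h : a < w1.length) (d : Bool) :
    (w1 ++ w2).getD a d = w1.getD a d := by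
  simp [List.getD_eq_getElem?_getD, List.getElem?_append_left h]

lemma getD_append_right (w1 w2 : List Bool) (a : ℕ) (d : Bool) :
    (w1 ++ w2).getD (w1.length + a) d = w2.getD a d := by
  simp [List.getD_eq_getElem?_getD, List.getElem?_append_right (Nat.le_add_right _ _)]

-- composite word  u = true :: w1 ++ false :: w2
section Composite
variable (w1 w2 : List Bool)

lemma comp_length : (true :: w1 ++ false :: w2).length = w1.length + 2 + w2.length := by
  simp; omega

lemma phA {s : ℕ} (hs : s ≤ w1.length) :
    prefixHeight (true :: w1 ++ false :: w2) (s + 1) = 1 + prefixHeight w1 s := by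
  rw [List.cons_append, ph_cons, ph_append_left _ _ hs]; simp

lemma phB (hb : prefixHeight w1 w1.length = 0) (s : ℕ) :
    prefixHeight (true :: w1 ++ false :: w2) (w1.length + 2 + s) = prefixHeight w2 s := by
  have e : w1.length + 2 + s = (w1.length + (1 + s)) + 1 := by omega
  rw [List.cons_append, e, ph_cons, ph_append_add, hb]
  have : (1 + s) = s + 1 := by omega
  rw [this, ph_cons]
  simp

lemma gA {a : ℕ} (ha : a < w1.length) (d : Bool) :
    (true :: w1 ++ false :: w2).getD (a + 1) d = w1.getD a d := by
  rw [List.cons_append, List.getD_cons_succ, getD_append_left ha]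

lemma gM (d : Bool) : (true :: w1 ++ false :: w2).getD (w1.length + 1) d = false := by
  rw [List.cons_append, show w1.length + 1 = (w1.length + 0) + 1 from by omega,
    List.getD_cons_succ]
  have h := getD_append_right w1 (false :: w2) 0 d
  simpa using h

lemma gB (a : ℕ) (d : Bool) :
    (true :: w1 ++ false :: w2).getD (w1.length + 2 + a) d = w2.getD a d := by
  have e : w1.length + 2 + a = (w1.length + (1 + a)) + 1 := by omega
  rw [List.cons_append, e, List.getD_cons_succ, getD_append_right]
  have : (1 + a) = a + 1 := by omega
  rw [this, List.getD_cons_succ]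

end Composite


/-- Every Dyck word of positive size decomposes as `U w₁ D w₂`. -/
lemma dyck_decomp {n : ℕ} {w : List Bool} (hw : IsDyckWord w (n + 1)) :
    ∃ (k m : ℕ) (w1 w2 : List Bool), w = true :: w1 ++ false :: w2 ∧
      IsDyckWord w1 k ∧ IsDyckWord w2 m ∧ n = k + m := by
  obtain ⟨hlen, hct, hpos⟩ := hw
  have hcf : w.count false = n + 1 := by
    have := count_true_add_count_false w; omega
  have hw0 : w.getD 0 false = true := by
    by_contra hb
    simp only [Bool.not_eq_true] at hb
    have h1 := ph_succ w 0 (by omega)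
    rw [hb, ph_zero] at h1
    norm_num at h1
    have h2 := hpos 1 (by omega)
    rw [h1] at h2
    norm_num at h2
  have hphl : prefixHeight w w.length = 0 := by
    rw [ph_length, hct, hcf]; ring
  have hex : ∃ t, 0 < t ∧ t ≤ w.length ∧ prefixHeight w t = 0 :=
    ⟨w.length, by omega, le_refl _, hphl⟩
  classical
  obtain ⟨t, ⟨ht0, htle, htz⟩, hmin'⟩ :
      ∃ t, (0 < t ∧ t ≤ w.length ∧ prefixHeight w t = 0) ∧
        ∀ s < t, ¬(0 < s ∧ s ≤ w.length ∧ prefixHeight w s = 0) :=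
    ⟨Nat.find hex, Nat.find_spec hex, fun s hs => Nat.find_min hex hs⟩
  have hmin : ∀ s, 0 < s → s < t → 1 ≤ prefixHeight w s := by
    intro s hs0 hst
    have h1 := hmin' s hst
    have h2 := hpos s (by omega)
    have h3 : prefixHeight w s ≠ 0 := fun h => h1 ⟨hs0, by omega, h⟩
    omega
  have hph1 : prefixHeight w 1 = 1 := by
    have h := ph_succ w 0 (by omega)
    rw [hw0, ph_zero] at h
    norm_num at h
    exact h
  have ht2 : 2 ≤ t := by
    rcases Nat.lt_or_ge t 2 with h | h
    · exfalso
      have h1 : t = 1 := by omega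
      rw [h1, hph1] at htz
      norm_num at htz
    · exact h
  have hstep := ph_succ w (t - 1) (by omega)
  rw [show t - 1 + 1 = t from by omega, htz] at hstep
  have htm1 : prefixHeight w (t - 1) = 1 := by
    have h1 := hmin (t - 1) (by omega) (by omega)
    rcases Bool.eq_false_or_eq_true (w.getD (t - 1) false) with hb | hb <;>
      rw [hb] at hstep <;> norm_num at hstep <;> omega
  have hwt : w.getD (t - 1) false = false := by
    rcases Bool.eq_false_or_eq_true (w.getD (t - 1) false) with hb | hb
    · exfalso
      rw [hb] at hstep
      norm_num at hstep
      omega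
    · exact hb
  -- the decomposition
  have h0 : w = true :: w.drop 1 := by
    cases hcw : w with
    | nil => rw [hcw] at hlen; simp at hlen
    | cons b l =>
      rw [hcw] at hw0
      simp only [List.getD_cons_zero] at hw0
      simp [hw0]
  have h3 : w.drop (t - 1) = false :: w.drop t := by
    have hd := List.drop_eq_getElem_cons (show t - 1 < w.length by omega) (l := w)
    have hgett : w[t-1]'(by omega) = false := by
      rw [List.getD_eq_getElem?_getD,
        List.getElem?_eq_getElem (show t - 1 < w.length by omega)] at hwt
      simpa using hwt
    rw [hd, hgett, show t - 1 + 1 = t from by omega]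
  have h1 : w.drop 1 = (w.drop 1).take (t - 2) ++ w.drop (t - 1) := by
    conv_lhs => rw [← List.take_append_drop (t - 2) (w.drop 1)]
    rw [List.drop_drop, show 1 + (t - 2) = t - 1 from by omega]
  have hdecomp : w = true :: (w.drop 1).take (t - 2) ++ false :: w.drop t := by
    conv_lhs => rw [h0, h1, h3]
    rw [List.cons_append]
  set w1 : List Bool := (w.drop 1).take (t - 2) with hw1
  set w2 : List Bool := w.drop t with hw2
  have hl1 : w1.length = t - 2 := by
    rw [hw1, List.length_take, List.length_drop]; omega
  have hl2 : w2.length = w.length - t := by rw [hw2, List.length_drop]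
  -- translate prefix heights
  have hphw1 : ∀ s ≤ w1.length, prefixHeight w (s + 1) = 1 + prefixHeight w1 s := by
    intro s hs
    rw [hdecomp] at *
    exact phA _ _ hs
  have hbal1 : prefixHeight w1 w1.length = 0 := by
    have h := hphw1 w1.length (le_refl _)
    rw [show w1.length + 1 = t - 1 from by omega, htm1] at h
    omega
  have hphw2 : ∀ s, prefixHeight w (w1.length + 2 + s) = prefixHeight w2 s := by
    intro s
    rw [hdecomp] at *
    exact phB _ _ hbal1 s
  -- w1 is a Dyck word
  have hk1 : w1.count true + w1.count false = w1.length := count_true_add_count_false w1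
  have hbal1' : (w1.count true : ℤ) - w1.count false = 0 := by
    rw [← ph_length]; exact hbal1
  have hl1k : w1.length = 2 * w1.count true := by omega
  have hd1 : IsDyckWord w1 (w1.count true) := by
    refine ⟨hl1k, rfl, fun s hs => ?_⟩
    have h1 := hphw1 s hs
    have h2 := hmin (s + 1) (by omega) (by omega)
    omega
  -- w2 is a Dyck word
  have hct2 : w.count true = 1 + w1.count true + w2.count true := by
    rw [hdecomp, List.cons_append, List.count_cons, List.count_append, List.count_cons]
    simp; omega
  have hcf2 : w.count false = 1 + w1.count false + w2.count false := by
    rw [hdecomp, List.cons_append, List.count_cons, List.count_append, List.count_cons]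
    simp; omega
  have hk2 : w2.count true + w2.count false = w2.length := count_true_add_count_false w2
  have hl2m : w2.length = 2 * w2.count true := by omega
  have hd2 : IsDyckWord w2 (w2.count true) := by
    refine ⟨hl2m, rfl, fun s hs => ?_⟩
    have h1 := hphw2 s
    have h2 := hpos (w1.length + 2 + s) (by omega)
    omega
  exact ⟨w1.count true, w2.count true, w1, w2, hdecomp, hd1, hd2, by omega⟩

section ChordClass
variable {w1 w2 : List Bool} {k m : ℕ}

lemma isChord_comp_iff (hd1 : IsDyckWord w1 k) (hd2 : IsDyckWord w2 m) (i j : ℕ) :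
    IsChord (true :: w1 ++ false :: w2) i j ↔
      (i = 0 ∧ j = w1.length + 1) ∨
      (∃ a b, IsChord w1 a b ∧ i = a + 1 ∧ j = b + 1) ∨
      (∃ a b, IsChord w2 a b ∧ i = w1.length + 2 + a ∧ j = w1.length + 2 + b) := by
  obtain ⟨hlen1, hct1, hpos1⟩ := hd1
  obtain ⟨hlen2, hct2, hpos2⟩ := hd2
  have hcc1 := count_true_add_count_false w1
  have hb1 : prefixHeight w1 w1.length = 0 := by rw [ph_length]; omega
  set u := true :: w1 ++ false :: w2 with hu
  have hulen : u.length = w1.length + 2 + w2.length := comp_length w1 w2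
  have hA : ∀ s ≤ w1.length, prefixHeight u (s + 1) = 1 + prefixHeight w1 s :=
    fun s hs => phA w1 w2 hs
  have hB : ∀ s, prefixHeight u (w1.length + 2 + s) = prefixHeight w2 s := phB w1 w2 hb1
  have hU0 : prefixHeight u 0 = 0 := ph_zero u
  have hUt : prefixHeight u (w1.length + 2) = 0 := by
    have h := hB 0; simpa [ph_zero] using h
  have hU1 : ∀ s, 1 ≤ s → s ≤ w1.length + 1 → 1 ≤ prefixHeight u s := by
    intro s h1 h2
    obtain ⟨s', rfl⟩ : ∃ s', s = s' + 1 := ⟨s - 1, by omega⟩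
    rw [hA s' (by omega)]
    have := hpos1 s' (by omega)
    omega
  constructor
  · rintro ⟨hij, hjlen, hgi, hgj, hph, hall⟩
    rcases Nat.lt_or_ge i 1 with hi0 | hi1
    · -- i = 0
      left
      have hi : i = 0 := by omega
      subst hi
      refine ⟨rfl, ?_⟩
      by_contra hj
      rcases Nat.lt_or_ge j (w1.length + 1) with hjl | hjg
      · have h1 := hU1 (j + 1) (by omega) (by omega)
        rw [hU0] at hph; omega
      · have hjg2 : w1.length + 2 ≤ j := by omega
        have h2 := hall (w1.length + 2) (by omega) (by omega)
        rw [hU0, hUt] at h2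
        omega
    rcases Nat.lt_or_ge i (w1.length + 1) with hil | hig
    · -- 1 ≤ i ≤ w1.length : chord of w1
      right; left
      obtain ⟨a, rfl⟩ : ∃ a, i = a + 1 := ⟨i - 1, by omega⟩
      have ha : a < w1.length := by omega
      have hphi : 1 ≤ prefixHeight u (a + 1) := hU1 _ (by omega) (by omega)
      have hjle : j ≤ w1.length := by
        by_contra hjg
        rcases Nat.lt_or_ge j (w1.length + 2) with hj1 | hj2
        · have hj : j = w1.length + 1 := by omega
          rw [hj] at hph
          rw [show w1.length + 1 + 1 = w1.length + 2 from by omega, hUt] at hph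
          omega
        · have h2 := hall (w1.length + 2) (by omega) (by omega)
          rw [hUt] at h2
          omega
      obtain ⟨b, rfl⟩ : ∃ b, j = b + 1 := ⟨j - 1, by omega⟩
      have hb : b < w1.length := by omega
      refine ⟨a, b, ⟨by omega, hb, ?_, ?_, ?_, ?_⟩, rfl, rfl⟩
      · rw [← gA w1 w2 ha]; exact hgi
      · rw [← gA w1 w2 hb]; exact hgj
      · have e1 := hA a (by omega)
        have e2 := hA (b + 1) (by omega)
        rw [e1, show b + 1 + 1 = (b + 1) + 1 from rfl, e2] at hph
        omega
      · intro s hs1 hs2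
        have h2 := hall (s + 1) (by omega) (by omega)
        rw [hA a (by omega), hA s (by omega)] at h2
        omega
    rcases Nat.lt_or_ge i (w1.length + 2) with hie | hi2
    · -- i = w1.length + 1 : impossible, this letter is D
      exfalso
      have hi : i = w1.length + 1 := by omega
      rw [hi, gM w1 w2 false] at hgi
      exact Bool.false_ne_true hgi
    · -- chord of w2
      right; right
      obtain ⟨a, rfl⟩ : ∃ a, i = w1.length + 2 + a := ⟨i - (w1.length + 2), by omega⟩
      obtain ⟨b, rfl⟩ : ∃ b, j = w1.length + 2 + b := ⟨j - (w1.length + 2), by omega⟩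
      refine ⟨a, b, ⟨by omega, by omega, ?_, ?_, ?_, ?_⟩, rfl, rfl⟩
      · rw [← gB w1 w2 a]; exact hgi
      · rw [← gB w1 w2 b]; exact hgj
      · have e1 := hB a
        have e2 := hB (b + 1)
        rw [e1, show w1.length + 2 + b + 1 = w1.length + 2 + (b + 1) from by omega, e2] at hph
        omega
      · intro s hs1 hs2
        have h2 := hall (w1.length + 2 + s) (by omega) (by omega)
        rw [hB a, hB s] at h2
        omega
  · rintro (⟨rfl, rfl⟩ | ⟨a, b, ⟨hab, hblen, hga, hgb, hphc, hallc⟩, rfl, rfl⟩ |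
      ⟨a, b, ⟨hab, hblen, hga, hgb, hphc, hallc⟩, rfl, rfl⟩)
    · refine ⟨by omega, by omega, ?_, gM w1 w2 true, ?_, ?_⟩
      · rw [hu, List.cons_append, List.getD_cons_zero]
      · rw [hU0, show w1.length + 1 + 1 = w1.length + 2 from by omega, hUt]
      · intro s hs1 hs2
        rw [hU0]
        exact lt_of_lt_of_le zero_lt_one (hU1 s (by omega) (by omega))
    · refine ⟨by omega, by omega, ?_, ?_, ?_, ?_⟩
      · rw [gA w1 w2 (by omega)]; exact hga
      · rw [gA w1 w2 hblen]; exact hgb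
      · rw [hA a (by omega), show b + 1 + 1 = (b + 1) + 1 from rfl, hA (b + 1) (by omega)]
        omega
      · intro s hs1 hs2
        obtain ⟨s', rfl⟩ : ∃ s', s = s' + 1 := ⟨s - 1, by omega⟩
        rw [hA a (by omega), hA s' (by omega)]
        have := hallc s' (by omega) (by omega)
        omega
    · refine ⟨by omega, by omega, ?_, ?_, ?_, ?_⟩
      · rw [gB w1 w2 a]; exact hga
      · rw [gB w1 w2 b]; exact hgb
      · rw [hB a, show w1.length + 2 + b + 1 = w1.length + 2 + (b + 1) from by omega, hB (b + 1)]
        omega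
      · intro s hs1 hs2
        obtain ⟨s', rfl⟩ : ∃ s', s = w1.length + 2 + s' := ⟨s - (w1.length + 2), by omega⟩
        rw [hB a, hB s']
        have := hallc s' (by omega) (by omega)
        omega

end ChordClass

lemma mem_chords {w : List Bool} {p : ℕ × ℕ} : p ∈ chords w ↔ IsChord w p.1 p.2 := by
  classical
  constructor
  · intro h
    exact (Finset.mem_filter.mp h).2
  · intro h
    refine Finset.mem_filter.mpr ⟨Finset.mem_product.mpr ⟨?_, ?_⟩, h⟩ <;>
      rw [Finset.mem_range]
    · exact lt_trans h.1 h.2.1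
    · exact h.2.1

lemma chords_bounds {w : List Bool} {p : ℕ × ℕ} (h : p ∈ chords w) :
    p.1 < p.2 ∧ p.2 < w.length := by
  have h' := mem_chords.mp h
  exact ⟨h'.1, h'.2.1⟩

section CompFinset
variable {w1 w2 : List Bool} {k m : ℕ}

def shf1 : ℕ × ℕ → ℕ × ℕ := fun p => (p.1 + 1, p.2 + 1)
def shf2 (l : ℕ) : ℕ × ℕ → ℕ × ℕ := fun p => (l + 2 + p.1, l + 2 + p.2)

lemma shf1_inj : Function.Injective shf1 := by
  rintro ⟨a, b⟩ ⟨c, d⟩ h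
  simp [shf1, Prod.ext_iff] at h ⊢
  omega

lemma shf2_inj (l : ℕ) : Function.Injective (shf2 l) := by
  rintro ⟨a, b⟩ ⟨c, d⟩ h
  simp [shf2, Prod.ext_iff] at h ⊢
  omega

lemma chords_comp (hd1 : IsDyckWord w1 k) (hd2 : IsDyckWord w2 m) :
    chords (true :: w1 ++ false :: w2) =
      insert (0, w1.length + 1)
        ((chords w1).image shf1 ∪ (chords w2).image (shf2 w1.length)) := by
  classical
  ext ⟨i, j⟩
  rw [mem_chords, isChord_comp_iff hd1 hd2, Finset.mem_insert, Finset.mem_union,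
    Finset.mem_image, Finset.mem_image]
  constructor
  · rintro (⟨rfl, rfl⟩ | ⟨a, b, hc, rfl, rfl⟩ | ⟨a, b, hc, rfl, rfl⟩)
    · exact Or.inl rfl
    · exact Or.inr (Or.inl ⟨(a, b), mem_chords.mpr hc, rfl⟩)
    · exact Or.inr (Or.inr ⟨(a, b), mem_chords.mpr hc, rfl⟩)
  · rintro (h | ⟨⟨a, b⟩, hc, h⟩ | ⟨⟨a, b⟩, hc, h⟩)
    · rw [Prod.ext_iff] at h
      exact Or.inl ⟨h.1, h.2⟩
    · rw [Prod.ext_iff] at h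
      exact Or.inr (Or.inl ⟨a, b, mem_chords.mp hc, h.1.symm, h.2.symm⟩)
    · rw [Prod.ext_iff] at h
      exact Or.inr (Or.inr ⟨a, b, mem_chords.mp hc, h.1.symm, h.2.symm⟩)

lemma outer_notmem (hd1 : IsDyckWord w1 k) (hd2 : IsDyckWord w2 m) :
    (0, w1.length + 1) ∉ (chords w1).image shf1 ∪ (chords w2).image (shf2 w1.length) := by
  classical
  rw [Finset.mem_union, Finset.mem_image, Finset.mem_image]
  rintro (⟨⟨a, b⟩, _, h⟩ | ⟨⟨a, b⟩, _, h⟩) <;> rw [Prod.ext_iff] at h <;>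
    simp [shf1, shf2] at h

lemma images_disjoint :
    Disjoint ((chords w1).image shf1) ((chords w2).image (shf2 w1.length)) := by
  classical
  rw [Finset.disjoint_left]
  rintro ⟨i, j⟩ h1 h2
  rw [Finset.mem_image] at h1 h2
  obtain ⟨⟨a, b⟩, hab, he1⟩ := h1
  obtain ⟨⟨c, d⟩, hcd, he2⟩ := h2
  have hb := chords_bounds hab
  rw [Prod.ext_iff] at he1 he2
  simp only [shf1, shf2] at he1 he2
  omega

end CompFinset

lemma dyck_nil {w : List Bool} (hw : IsDyckWord w 0) : w = [] :=
  List.length_eq_zero_iff.mp (by rw [hw.1])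

lemma chords_nil : chords [] = ∅ := by
  classical
  simp [chords]

lemma card_chords : ∀ n (w : List Bool), IsDyckWord w n → (chords w).card = n := by
  intro n
  induction n using Nat.strong_induction_on with
  | _ n ih =>
    intro w hw
    match n with
    | 0 => rw [dyck_nil hw, chords_nil]; rfl
    | Nat.succ n =>
      obtain ⟨k, m, w1, w2, rfl, hd1, hd2, hnm⟩ := dyck_decomp hw
      rw [chords_comp hd1 hd2, Finset.card_insert_of_notMem (outer_notmem hd1 hd2),
        Finset.card_union_of_disjoint images_disjoint,
        Finset.card_image_of_injective _ shf1_inj,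
        Finset.card_image_of_injective _ (shf2_inj _),
        ih k (by omega) w1 hd1, ih m (by omega) w2 hd2]
      omega

section CLength
variable {w1 w2 : List Bool} {k m : ℕ}

lemma chordLength_comp_outer (hd1 : IsDyckWord w1 k) (hd2 : IsDyckWord w2 m) :
    chordLength (true :: w1 ++ false :: w2) (0, w1.length + 1) = (chords w1).card + 1 := by
  classical
  unfold chordLength
  have hset : ((chords (true :: w1 ++ false :: w2)).filter
        fun p => (0, w1.length + 1).1 ≤ p.1 ∧ p.2 ≤ (0, w1.length + 1).2)
      = insert (0, w1.length + 1) ((chords w1).image shf1) := by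
    rw [chords_comp hd1 hd2]
    ext ⟨i, j⟩
    simp only [Finset.mem_filter, Finset.mem_insert, Finset.mem_union, Finset.mem_image,
      shf1, shf2, Prod.mk.injEq, Prod.exists, Prod.fst, Prod.snd]
    constructor
    · rintro ⟨⟨h1, h2⟩ | ⟨a, b, hab, heq1, heq2⟩ | ⟨a, b, hab, heq1, heq2⟩, hc1, hc2⟩
      · exact Or.inl ⟨h1, h2⟩
      · exact Or.inr ⟨a, b, hab, heq1, heq2⟩
      · exfalso; omega
    · rintro (⟨h1, h2⟩ | ⟨a, b, hab, heq1, heq2⟩)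
      · exact ⟨Or.inl ⟨h1, h2⟩, by omega, by omega⟩
      · have hb := chords_bounds hab
        exact ⟨Or.inr (Or.inl ⟨a, b, hab, heq1, heq2⟩), by omega, by omega⟩
  rw [hset, Finset.card_insert_of_notMem, Finset.card_image_of_injective _ shf1_inj]
  rw [Finset.mem_image]
  rintro ⟨⟨a, b⟩, hab, heq⟩
  rw [Prod.ext_iff] at heq
  simp [shf1] at heq

lemma chordLength_comp_1 (hd1 : IsDyckWord w1 k) (hd2 : IsDyckWord w2 m) {c : ℕ × ℕ}
    (hc : c ∈ chords w1) :
    chordLength (true :: w1 ++ false :: w2) (shf1 c) = chordLength w1 c := by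
  classical
  unfold chordLength
  have hcb := chords_bounds hc
  have hset : ((chords (true :: w1 ++ false :: w2)).filter
        fun p => (shf1 c).1 ≤ p.1 ∧ p.2 ≤ (shf1 c).2)
      = ((chords w1).filter fun p => c.1 ≤ p.1 ∧ p.2 ≤ c.2).image shf1 := by
    rw [chords_comp hd1 hd2]
    ext ⟨i, j⟩
    simp only [Finset.mem_filter]
    simp only [Finset.mem_filter, Finset.mem_insert, Finset.mem_union, Finset.mem_image,
      shf1, shf2, Prod.mk.injEq, Prod.exists, Prod.fst, Prod.snd]
    constructor
    · rintro ⟨⟨h1, h2⟩ | ⟨a, b, hab, heq1, heq2⟩ | ⟨a, b, hab, heq1, heq2⟩, hc1, hc2⟩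
      · omega
      · have hb := chords_bounds hab
        exact ⟨a, b, ⟨hab, by omega, by omega⟩, by omega, by omega⟩
      · exfalso
        have hb := chords_bounds hab
        omega
    · rintro ⟨a, b, ⟨hab, h1, h2⟩, heq1, heq2⟩
      exact ⟨Or.inr (Or.inl ⟨a, b, hab, by omega, by omega⟩), by omega, by omega⟩
  rw [hset, Finset.card_image_of_injective _ shf1_inj]

lemma chordLength_comp_2 (hd1 : IsDyckWord w1 k) (hd2 : IsDyckWord w2 m) {c : ℕ × ℕ}
    (hc : c ∈ chords w2) :
    chordLength (true :: w1 ++ false :: w2) (shf2 w1.length c) = chordLength w2 c := by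
  classical
  unfold chordLength
  have hcb := chords_bounds hc
  have hset : ((chords (true :: w1 ++ false :: w2)).filter
        fun p => (shf2 w1.length c).1 ≤ p.1 ∧ p.2 ≤ (shf2 w1.length c).2)
      = ((chords w2).filter fun p => c.1 ≤ p.1 ∧ p.2 ≤ c.2).image (shf2 w1.length) := by
    rw [chords_comp hd1 hd2]
    ext ⟨i, j⟩
    simp only [Finset.mem_filter]
    simp only [Finset.mem_filter, Finset.mem_insert, Finset.mem_union, Finset.mem_image,
      shf1, shf2, Prod.mk.injEq, Prod.exists, Prod.fst, Prod.snd]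
    constructor
    · rintro ⟨⟨h1, h2⟩ | ⟨a, b, hab, heq1, heq2⟩ | ⟨a, b, hab, heq1, heq2⟩, hc1, hc2⟩
      · omega
      · exfalso
        have hb := chords_bounds hab
        omega
      · have hb := chords_bounds hab
        exact ⟨a, b, ⟨hab, by omega, by omega⟩, by omega, by omega⟩
    · rintro ⟨a, b, ⟨hab, h1, h2⟩, heq1, heq2⟩
      exact ⟨Or.inr (Or.inr ⟨a, b, hab, by omega, by omega⟩), by omega, by omega⟩
  rw [hset, Finset.card_image_of_injective _ (shf2_inj _)]

end CLength

lemma chordLength_pos {w : List Bool} {c : ℕ × ℕ} (hc : c ∈ chords w) :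
    0 < chordLength w c := by
  classical
  unfold chordLength
  rw [Finset.card_pos]
  exact ⟨c, Finset.mem_filter.mpr ⟨hc, le_refl _, le_refl _⟩⟩

lemma prod_chords_ne_zero (w : List Bool) :
    (∏ c ∈ chords w, qInt (chordLength w c)) ≠ 0 :=
  Finset.prod_ne_zero_iff.2 fun c hc => qInt_ne_zero (chordLength_pos hc)

lemma prod_qInt_chords_comp {w1 w2 : List Bool} {k m : ℕ}
    (hd1 : IsDyckWord w1 k) (hd2 : IsDyckWord w2 m) :
    ∏ c ∈ chords (true :: w1 ++ false :: w2),
        qInt (chordLength (true :: w1 ++ false :: w2) c)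
      = qInt (k + 1) * (∏ c ∈ chords w1, qInt (chordLength w1 c)) *
          ∏ c ∈ chords w2, qInt (chordLength w2 c) := by
  classical
  rw [chords_comp hd1 hd2, Finset.prod_insert (outer_notmem hd1 hd2),
    Finset.prod_union images_disjoint,
    Finset.prod_image (fun x _ y _ h => shf1_inj h),
    Finset.prod_image (fun x _ y _ h => shf2_inj _ h),
    chordLength_comp_outer hd1 hd2, card_chords k w1 hd1]
  rw [mul_assoc]
  congr 1
  congr 1
  · exact Finset.prod_congr rfl fun c hc => by rw [chordLength_comp_1 hd1 hd2 hc]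
  · exact Finset.prod_congr rfl fun c hc => by rw [chordLength_comp_2 hd1 hd2 hc]

/-- For a Dyck path `λ` of size `n`, the rational function
`[n]! / ∏_{c ∈ Chord(λ)} [l(c)]` is a polynomial in `q` with nonnegative integer
coefficients (it is the generating function `P^A_λ` of cover-inclusive Dyck tilings
above `λ` weighted by `q^{art}`). -/
theorem qFact_div_prod_chord_is_natPoly (n : ℕ) (w : List Bool) (hw : IsDyckWord w n) :
    ∃ p : Polynomial ℕ,
      qFact n / ∏ c ∈ chords w, qInt (chordLength w c) = natPolyToRatFunc p := by
  induction n using Nat.strong_induction_on generalizing w with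
  | _ n ih =>
    cases n with
    | zero =>
      rw [dyck_nil hw, chords_nil]
      refine ⟨1, ?_⟩
      simp [qFact_zero, natPoly_one]
    | succ n' =>
      obtain ⟨k, m, w1, w2, rfl, hd1, hd2, hnm⟩ := dyck_decomp hw
      obtain ⟨p1, hp1⟩ := ih k (by omega) w1 hd1
      obtain ⟨p2, hp2⟩ := ih m (by omega) w2 hd2
      obtain ⟨pb, hpb⟩ := qBinom_isNatPoly (n' + 1) (k + 1) (by omega)
      refine ⟨pb * p1 * p2, ?_⟩
      rw [natPoly_mul, natPoly_mul, ← hpb, ← hp1, ← hp2]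
      rw [prod_qInt_chords_comp hd1 hd2]
      rw [qBinom]
      have hP1 := prod_chords_ne_zero w1
      have hP2 := prod_chords_ne_zero w2
      have hq : qInt (k + 1) ≠ 0 := qInt_ne_zero (by omega)
      have hf1 : qFact (k + 1) = qFact k * qInt (k + 1) := qFact_succ k
      have hfk : qFact k ≠ 0 := qFact_ne_zero k
      have hfm : qFact m ≠ 0 := qFact_ne_zero m
      have hsub : n' + 1 - (k + 1) = m := by omega
      rw [hsub, hf1]
      rw [div_mul_div_comm, div_mul_div_comm,
        div_eq_div_iff (mul_ne_zero (mul_ne_zero hq hP1) hP2)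
          (mul_ne_zero (mul_ne_zero (mul_ne_zero (mul_ne_zero hfk hq) hfm) hP1) hP2)]
      ring
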